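/- For n ≥ 8, let c_n = (-9 + √(12n - 3))/(12n) be the positive critical point of G_n(y) = 4n³y³ + 9n²y² + (7n - n²)y + 2. Then the critical value equals G_n(c_n) = (1/(24√3))·(3√3·(6n+1) - (4n-1)^{3/2}), and this expression is a strictly decreasing function of n for n ≥ 8. -/

import Mathlib

/-- The cubic `G_n(y) = 4n³y³ + 9n²y² + (7n - n²)y + 2`. -/
noncomputable def G (n : ℕ) (y : ℝ) : ℝ :=
  4*(n:ℝ)^3*y^3 + 9*(n:ℝ)^2*y^2 + (7*(n:ℝ) - (n:ℝ)^2)*y + 2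

/-- The positive critical point `c_n = (-9 + √(12n-3))/(12n)` of `G_n`. -/
noncomputable def cG (n : ℕ) : ℝ := (-9 + Real.sqrt (12*(n:ℝ) - 3)) / (12*(n:ℝ))

set_option maxHeartbeats 1000000 in
/-- For `n ≥ 8`, `c_n` is the positive critical point of `G_n`, the critical value is
`G_n(c_n) = (1/(24√3))·(3√3(6n+1) - (4n-1)^{3/2})`, and this expression is strictly
decreasing in `n` for `n ≥ 8`. -/
theorem Gn_critical_value (n : ℕ) (hn : 8 ≤ n) :
    0 < cG n ∧ deriv (G n) (cG n) = 0 ∧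
    G n (cG n) = (1 / (24 * Real.sqrt 3)) *
      (3 * Real.sqrt 3 * (6*(n:ℝ) + 1) - (Real.sqrt (4*(n:ℝ) - 1))^3) ∧
    (∀ m k : ℕ, 8 ≤ m → m < k →
      (1 / (24 * Real.sqrt 3)) *
          (3 * Real.sqrt 3 * (6*(k:ℝ) + 1) - (Real.sqrt (4*(k:ℝ) - 1))^3) <
        (1 / (24 * Real.sqrt 3)) *
          (3 * Real.sqrt 3 * (6*(m:ℝ) + 1) - (Real.sqrt (4*(m:ℝ) - 1))^3)) := by
  have hn8 : (8:ℝ) ≤ (n:ℝ) := by exact_mod_cast hn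
  have hnpos : (0:ℝ) < (n:ℝ) := by linarith
  set r := Real.sqrt 3 with hrdef
  set t := Real.sqrt (4*(n:ℝ) - 1) with htdef
  have hr2 : r^2 = 3 := Real.sq_sqrt (by norm_num)
  have hr0 : 0 < r := Real.sqrt_pos.2 (by norm_num)
  have ht2 : t^2 = 4*(n:ℝ) - 1 := Real.sq_sqrt (by linarith)
  have ht0 : 0 < t := Real.sqrt_pos.2 (by linarith)
  have hs : Real.sqrt (12*(n:ℝ) - 3) = r * t := by
    rw [show (12*(n:ℝ) - 3) = 3 * (4*(n:ℝ) - 1) by ring]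
    exact Real.sqrt_mul (by norm_num) _
  have hc : cG n = (-9 + r*t) / (12*(n:ℝ)) := by rw [cG, hs]
  have hrt9 : 9 < r * t := by
    nlinarith [mul_pos hr0 ht0, hr2, ht2, hn8, sq_nonneg (r*t)]
  refine ⟨?_, ?_, ?_, ?_⟩
  · rw [hc]; exact div_pos (by linarith) (by linarith)
  · have hGeq : G n = fun y : ℝ =>
        4*(n:ℝ)^3*y^3 + (9*(n:ℝ)^2*y^2 + ((7*(n:ℝ) - (n:ℝ)^2)*y + 2)) := by
      funext y; rw [G]; ring
    have h1 : HasDerivAt (fun y : ℝ => 4*(n:ℝ)^3*y^3) (4*(n:ℝ)^3*(3*(cG n)^2)) (cG n) := by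
      simpa using (hasDerivAt_pow 3 (cG n)).const_mul (4*(n:ℝ)^3)
    have h2 : HasDerivAt (fun y : ℝ => 9*(n:ℝ)^2*y^2) (9*(n:ℝ)^2*(2*(cG n))) (cG n) := by
      simpa using (hasDerivAt_pow 2 (cG n)).const_mul (9*(n:ℝ)^2)
    have h3 : HasDerivAt (fun y : ℝ => (7*(n:ℝ) - (n:ℝ)^2)*y + 2)
        (7*(n:ℝ) - (n:ℝ)^2) (cG n) := by
      simpa using ((hasDerivAt_id (cG n)).const_mul (7*(n:ℝ) - (n:ℝ)^2)).add_const 2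
    have hD := (h1.add (h2.add h3))
    have hD' : HasDerivAt (fun y : ℝ => 4*(n:ℝ)^3*y^3 + (9*(n:ℝ)^2*y^2 + ((7*(n:ℝ) - (n:ℝ)^2)*y + 2)))
        (4*(n:ℝ)^3*(3*(cG n)^2) + (9*(n:ℝ)^2*(2*(cG n)) + (7*(n:ℝ) - (n:ℝ)^2))) (cG n) := hD
    rw [hGeq, hD'.deriv, hc]
    field_simp
    linear_combination (12*(n:ℝ)*t^2) * hr2 + (36*(n:ℝ)) * ht2
  · rw [G, hc]
    field_simp
    linear_combination
      (864*t - 3456*t*(n:ℝ) + 96*r^2*t^3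
        + 288*t^3) * hr2 + (2592*t) * ht2
  · intro m k hm hmk
    have hm8 : (8:ℝ) ≤ (m:ℝ) := by exact_mod_cast hm
    have hmk' : (m:ℝ) < (k:ℝ) := by exact_mod_cast hmk
    set a := Real.sqrt (4*(k:ℝ) - 1) with hadef
    set b := Real.sqrt (4*(m:ℝ) - 1) with hbdef
    have ha2 : a^2 = 4*(k:ℝ) - 1 := Real.sq_sqrt (by linarith)
    have hb2 : b^2 = 4*(m:ℝ) - 1 := Real.sq_sqrt (by linarith)
    have hb0 : 0 < b := Real.sqrt_pos.2 (by linarith)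
    have hab : b < a := Real.sqrt_lt_sqrt (by linarith) (by linarith)
    have hb3 : 3*r < b := by
      nlinarith [hr2, hb2, hm8, hb0, hr0]
    have hkey : 18*r*(a+b) < 4*(a^2+a*b+b^2) := by
      nlinarith [mul_pos (sub_pos.2 hab) (show (0:ℝ) < 2*a + b by linarith),
        mul_lt_mul_of_pos_right hb3 (show (0:ℝ) < a + b by linarith)]
    have hmain : 18*r*((k:ℝ)-(m:ℝ)) < a^3 - b^3 := by
      nlinarith [mul_lt_mul_of_pos_left hkey (sub_pos.2 hab), ha2, hb2]
    have hcpos : (0:ℝ) < 1/(24*r) := by positivity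
    have hXY : 3*r*(6*(k:ℝ)+1) - a^3 < 3*r*(6*(m:ℝ)+1) - b^3 := by nlinarith [hmain]
    exact mul_lt_mul_of_pos_left hXY hcpos
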